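/- Let G be a finite p-group and φ an automorphism of G with G = [G, φ]. Let φ_{p'} be the p'-part of φ (a generator of the Hall p'-subgroup of ⟨φ⟩). Then [G, φ_{p'}] = G. -/

import Mathlib

/-- The subgroup `[G, φ] = ⟨g⁻¹ g^φ : g ∈ G⟩` for an automorphism `φ` of `G`. -/
def commAut {G : Type} [Group G] (φ : MulAut G) : Subgroup G :=
  Subgroup.closure {x : G | ∃ g : G, x = g⁻¹ * φ g}

variable {G : Type} [Group G]

open scoped commutatorElement

lemma mem_commAut (ψ : MulAut G) (g : G) : g⁻¹ * ψ g ∈ commAut ψ :=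
  Subgroup.subset_closure ⟨g, rfl⟩

lemma commAut_normal (ψ : MulAut G) : (commAut ψ).Normal := by
  have conj_gen : ∀ a g : G, g * (a⁻¹ * ψ a) * g⁻¹ ∈ commAut ψ := by
    intro a g
    have h1 : (a * g⁻¹)⁻¹ * ψ (a * g⁻¹) ∈ commAut ψ := mem_commAut ψ _
    have h2 : (g⁻¹)⁻¹ * ψ g⁻¹ ∈ commAut ψ := mem_commAut ψ _
    have : g * (a⁻¹ * ψ a) * g⁻¹ =
        ((a * g⁻¹)⁻¹ * ψ (a * g⁻¹)) * ((g⁻¹)⁻¹ * ψ g⁻¹)⁻¹ := by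
      simp only [map_mul, map_inv]; group
    rw [this]; exact (commAut ψ).mul_mem h1 ((commAut ψ).inv_mem h2)
  constructor
  intro n hn g
  induction hn using Subgroup.closure_induction'' with
  | one => simpa using (commAut ψ).one_mem
  | mul x y hx hy ihx ihy =>
      have : g * (x * y) * g⁻¹ = (g * x * g⁻¹) * (g * y * g⁻¹) := by group
      rw [this]; exact (commAut ψ).mul_mem ihx ihy
  | mem x hx =>
      obtain ⟨a, rfl⟩ := hx
      exact conj_gen a g
  | inv_mem x hx =>
      obtain ⟨a, rfl⟩ := hx
      have : g * (a⁻¹ * ψ a)⁻¹ * g⁻¹ = (g * (a⁻¹ * ψ a) * g⁻¹)⁻¹ := by group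
      rw [this]; exact (commAut ψ).inv_mem (conj_gen a g)

lemma mem_commAut_pow (ψ : MulAut G) (j : ℕ) (g : G) :
    g⁻¹ * (ψ ^ j) g ∈ commAut ψ := by
  induction j generalizing g with
  | zero => simpa using (commAut ψ).one_mem
  | succ n ih =>
      have : g⁻¹ * (ψ ^ (n+1)) g = (g⁻¹ * ψ g) * ((ψ g)⁻¹ * (ψ ^ n) (ψ g)) := by
        rw [pow_succ, MulAut.mul_apply]
        group
      rw [this]
      exact (commAut ψ).mul_mem (mem_commAut ψ g) (ih (ψ g))

lemma map_commAut (φ ψ : MulAut G) (hc : ∀ g, φ (ψ g) = ψ (φ g)) :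
    Subgroup.map φ.toMonoidHom (commAut ψ) = commAut ψ := by
  rw [commAut, MonoidHom.map_closure]
  congr 1
  ext x
  constructor
  · rintro ⟨y, ⟨a, rfl⟩, rfl⟩
    exact ⟨φ a, by simp [hc]⟩
  · rintro ⟨a, rfl⟩
    exact ⟨(φ.symm a)⁻¹ * ψ (φ.symm a), ⟨φ.symm a, rfl⟩, by
      simp [map_mul, map_inv, hc]⟩

lemma subsingleton_of_commutator_eq_top (Q : Type*) [Group Q]
    (hn : Group.IsNilpotent Q) (hc : commutator Q = ⊤) : Subsingleton Q := by
  have hall : ∀ n, Subgroup.lowerCentralSeries (⊤ : Subgroup Q) n = ⊤ := by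
    intro n
    induction n with
    | zero => simp
    | succ n ih =>
        rw [Subgroup.lowerCentralSeries_succ, ih]
        exact hc
  obtain ⟨n, hn'⟩ := Subgroup.nilpotent_iff_lowerCentralSeries.mp hn
  rw [hall n] at hn'
  constructor
  intro a b
  have ha : a ∈ (⊥ : Subgroup Q) := hn' ▸ Subgroup.mem_top a
  have hb : b ∈ (⊥ : Subgroup Q) := hn' ▸ Subgroup.mem_top b
  rw [Subgroup.mem_bot] at ha hb
  rw [ha, hb]

/-- Let `G` be a finite `p`-group and `φ` an automorphism with `G = [G, φ]`.  If `ψ`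
is the `p'`-part of `φ`, i.e. a generator of the Hall `p'`-subgroup of `⟨φ⟩` (an
element of `⟨φ⟩` whose order is the `p'`-part of the order of `φ`), then `[G, ψ] = G`. -/
theorem stmt17 (p : ℕ) (hp : p.Prime) (G : Type) [Group G] [Finite G]
    (hG : IsPGroup p G) (φ : MulAut G) (h : commAut φ = ⊤)
    (ψ : MulAut G) (hψ1 : ψ ∈ Subgroup.zpowers φ)
    (hψ2 : orderOf ψ = orderOf φ / p ^ (orderOf φ).factorization p) :
    commAut ψ = ⊤ := by
  by_contra hN
  haveI : Fact p.Prime := ⟨hp⟩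
  haveI : (commAut ψ).Normal := commAut_normal ψ
  set n := orderOf φ with hn
  set v := n.factorization p with hv
  -- commute
  obtain ⟨z, hz⟩ := hψ1
  have hz' : φ ^ z = ψ := hz
  have hcomm : ∀ g, φ (ψ g) = ψ (φ g) := by
    intro g
    have : φ * ψ = ψ * φ := by
      rw [← hz']; exact (Commute.refl φ).zpow_right z
    calc φ (ψ g) = (φ * ψ) g := rfl
      _ = (ψ * φ) g := by rw [this]
      _ = ψ (φ g) := rfl
  set K := commAut ψ ⊔ commutator G with hK
  haveI : K.Normal := Subgroup.sup_normal _ _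
  -- K is proper
  have hKne : K ≠ ⊤ := by
    intro hKtop
    apply hN
    have hmapN : Subgroup.map (QuotientGroup.mk' (commAut ψ)) (commAut ψ) = ⊥ := by
      rw [eq_bot_iff]
      rintro x ⟨m, hm, rfl⟩
      simpa [Subgroup.mem_bot, QuotientGroup.eq_one_iff] using hm
    have hQc : commutator (G ⧸ commAut ψ) = ⊤ := by
      have h2 := congrArg (Subgroup.map (QuotientGroup.mk' (commAut ψ))) hKtop
      rw [Subgroup.map_sup, hmapN,
        Subgroup.map_top_of_surjective _ (QuotientGroup.mk'_surjective _),
        commutator_def, Subgroup.map_commutator,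
        Subgroup.map_top_of_surjective _ (QuotientGroup.mk'_surjective _)] at h2
      rw [commutator_def]
      simpa using h2
    have hsub : Subsingleton (G ⧸ commAut ψ) :=
      subsingleton_of_commutator_eq_top _ ((hG.to_quotient _).isNilpotent) hQc
    rw [eq_top_iff]
    intro g _
    have : (QuotientGroup.mk' (commAut ψ)) g = 1 := Subsingleton.elim _ _
    rwa [← QuotientGroup.ker_mk' (commAut ψ)]
  -- K is φ-invariant
  have hKinv : Subgroup.map φ.toMonoidHom K = K := by
    rw [hK, Subgroup.map_sup, map_commAut φ ψ hcomm, commutator_def,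
      Subgroup.map_commutator, Subgroup.map_top_of_surjective _ φ.surjective,
      ← commutator_def]
  -- quotient
  set A := G ⧸ K with hA
  set φb : MulAut A := QuotientGroup.congr K K φ hKinv with hφb
  have hbar : ∀ g : G, φb (QuotientGroup.mk g) = QuotientGroup.mk (φ g) := fun g => rfl
  -- A is commutative
  have hcommA : ∀ x y : A, x * y = y * x := by
    intro x y
    refine QuotientGroup.induction_on x fun a => QuotientGroup.induction_on y fun b => ?_
    show (QuotientGroup.mk (a * b) : A) = QuotientGroup.mk (b * a)
    rw [QuotientGroup.eq]
    have hmem : ⁅b⁻¹, a⁻¹⁆ ∈ K :=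
      le_sup_right (α := Subgroup G)
        (Subgroup.commutator_mem_commutator (Subgroup.mem_top _) (Subgroup.mem_top _))
    have : (a * b)⁻¹ * (b * a) = ⁅b⁻¹, a⁻¹⁆ := by
      rw [commutatorElement_def]; group
    rwa [this]
  -- commAut φb = ⊤
  have hsurjset : Subgroup.map (QuotientGroup.mk' K) (commAut φ) ≤ commAut φb := by
    rw [commAut, commAut, MonoidHom.map_closure]
    apply Subgroup.closure_mono
    rintro x ⟨y, ⟨g, rfl⟩, rfl⟩
    exact ⟨QuotientGroup.mk g, by simp [hbar]⟩
  have htopb : commAut φb = ⊤ := by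
    rw [eq_top_iff]
    calc (⊤ : Subgroup A) = Subgroup.map (QuotientGroup.mk' K) ⊤ :=
          (Subgroup.map_top_of_surjective _ (QuotientGroup.mk'_surjective _)).symm
      _ = Subgroup.map (QuotientGroup.mk' K) (commAut φ) := by rw [h]
      _ ≤ commAut φb := hsurjset
  -- arithmetic: φ ^ (p ^ v) ∈ zpowers ψ
  have hnpos : 0 < n := orderOf_pos φ
  obtain ⟨k, hk⟩ : ∃ k : ℕ, φ ^ k = ψ :=
    (isOfFinOrder_of_finite φ).mem_powers_iff_mem_zpowers.mpr ⟨z, hz⟩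
  have hpvdvd : p ^ v ∣ n := Nat.ordProj_dvd n p
  have hgcd : Nat.gcd n k = p ^ v := by
    have h1 : orderOf (φ ^ k) = n / Nat.gcd n k := orderOf_pow φ
    rw [hk, hψ2] at h1
    have h2 : Nat.gcd n k ∣ n := Nat.gcd_dvd_left n k
    calc Nat.gcd n k = n / (n / Nat.gcd n k) := (Nat.div_div_self h2 hnpos.ne').symm
      _ = n / (n / p ^ v) := by rw [← h1]
      _ = p ^ v := Nat.div_div_self hpvdvd hnpos.ne'
  have hbez : φ ^ (p ^ v) ∈ Subgroup.zpowers ψ := by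
    have hb : ((p ^ v : ℕ) : ℤ) = n * Nat.gcdA n k + k * Nat.gcdB n k := by
      rw [← hgcd]; exact Nat.gcd_eq_gcd_ab n k
    have : φ ^ (p ^ v) = ψ ^ (Nat.gcdB n k) := by
      have := zpow_natCast φ (p ^ v)
      rw [← this, hb, zpow_add, zpow_mul, zpow_mul, zpow_natCast, zpow_natCast,
        pow_orderOf_eq_one, one_zpow, one_mul, hk]
    rw [this]
    exact zpow_mem (Subgroup.mem_zpowers ψ) _
  obtain ⟨j, hj⟩ : ∃ j : ℕ, ψ ^ j = φ ^ (p ^ v) :=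
    (isOfFinOrder_of_finite ψ).mem_powers_iff_mem_zpowers.mpr hbez
  -- φb ^ (p ^ v) = 1
  have hApow : ∀ (m : ℕ) (g : G),
      (φb ^ m) (QuotientGroup.mk g) = QuotientGroup.mk ((φ ^ m) g) := by
    intro m
    induction m with
    | zero => intro g; rfl
    | succ m ih =>
        intro g
        rw [pow_succ, pow_succ]
        calc (φb ^ m * φb) (QuotientGroup.mk g)
            = (φb ^ m) (φb (QuotientGroup.mk g)) := rfl
          _ = (φb ^ m) (QuotientGroup.mk (φ g)) := by rw [hbar]
          _ = QuotientGroup.mk ((φ ^ m) (φ g)) := ih (φ g)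
          _ = QuotientGroup.mk ((φ ^ m * φ) g) := rfl
  have hφbpow : φb ^ (p ^ v) = 1 := by
    ext x
    refine QuotientGroup.induction_on x fun g => ?_
    show (φb ^ (p ^ v)) (QuotientGroup.mk g) = QuotientGroup.mk g
    rw [hApow, ← hj]
    rw [QuotientGroup.eq]
    have : ((ψ ^ j) g)⁻¹ * g = (g⁻¹ * (ψ ^ j) g)⁻¹ := by group
    rw [this]
    exact K.inv_mem (le_sup_left (α := Subgroup G) (mem_commAut_pow ψ j g))
  -- zpowers φb is a p-group
  have hZp : IsPGroup p (Subgroup.zpowers φb) := by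
    rintro ⟨x, hx⟩
    obtain ⟨i, rfl⟩ := hx
    refine ⟨v, ?_⟩
    apply Subtype.ext
    rw [SubmonoidClass.coe_pow, OneMemClass.coe_one]
    show (φb ^ i) ^ (p ^ v) = 1
    rw [← zpow_natCast (φb ^ i), ← zpow_mul, mul_comm, zpow_mul, zpow_natCast, hφbpow, one_zpow]
  -- the fixed point
  have hAnt : Nontrivial A := by
    obtain ⟨g, hg⟩ : ∃ g : G, g ∉ K := by
      by_contra hc
      push_neg at hc
      exact hKne (Subgroup.eq_top_iff' K |>.mpr hc)
    exact ⟨⟨QuotientGroup.mk g, 1, by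
      rw [Ne, QuotientGroup.eq_one_iff]; exact hg⟩⟩
  have hpA : IsPGroup p A := hG.to_quotient K
  have hdvd : p ∣ Nat.card A := by
    obtain ⟨m, hm⟩ := IsPGroup.iff_card.mp hpA
    have : 1 < Nat.card A := Finite.one_lt_card
    rw [hm] at this ⊢
    refine dvd_pow_self p ?_
    rintro rfl
    simp at this
  have hone : (1 : A) ∈ MulAction.fixedPoints (Subgroup.zpowers φb) A := by
    intro z
    show (z : MulAut A) • (1 : A) = 1
    rw [MulAut.smul_def, map_one]
  obtain ⟨b, hbfix, hb1⟩ :=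
    hZp.exists_fixed_point_of_prime_dvd_card_of_fixed_point A hdvd hone
  have hfixb : φb b = b := by
    have := hbfix ⟨φb, Subgroup.mem_zpowers φb⟩
    simpa [Submonoid.smul_def, MulAut.smul_def] using this
  -- the homomorphism a ↦ a⁻¹ * φb a
  let f : A →* A :=
    { toFun := fun a => a⁻¹ * φb a
      map_one' := by simp
      map_mul' := by
        intro a b
        show (a * b)⁻¹ * φb (a * b) = (a⁻¹ * φb a) * (b⁻¹ * φb b)
        rw [map_mul, mul_inv_rev]
        calc b⁻¹ * a⁻¹ * (φb a * φb b) = (b⁻¹ * (a⁻¹ * φb a)) * φb b := by group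
          _ = ((a⁻¹ * φb a) * b⁻¹) * φb b := by rw [hcommA b⁻¹ (a⁻¹ * φb a)]
          _ = a⁻¹ * φb a * (b⁻¹ * φb b) := by group }
  have hrange : commAut φb = f.range := by
    rw [commAut]
    have : {x : A | ∃ g : A, x = g⁻¹ * φb g} = (f.range : Set A) := by
      ext x
      simp only [Set.mem_setOf_eq, SetLike.mem_coe, MonoidHom.mem_range]
      exact exists_congr fun g => ⟨fun h' => h'.symm, fun h' => h'.symm⟩
    rw [this, Subgroup.closure_eq]
  have hfsurj : Function.Surjective f := by
    rw [← MonoidHom.range_eq_top, ← hrange, htopb]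
  have hfinj : Function.Injective f := Finite.injective_iff_surjective.mpr hfsurj
  apply hb1
  have hfb : f b = 1 := by
    show b⁻¹ * φb b = 1
    rw [hfixb, inv_mul_cancel]
  have : f b = f 1 := by rw [hfb, map_one]
  exact (hfinj this).symm
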